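/- arXiv:2410.04758 — 5 statements merged into one kernel-verified Lean document; each statement's English description precedes it below -/
import Mathlib

section
/- Fix Λ < 0 and r_+ > 0. For M ∈ ℝ define e²(M) := 2Mr_+ − r_+² − (−Λ/3)r_+⁴, so that the function Ω²_M(r) := 1 − 2M/r + e²(M)/r² + (−Λ/3)r² satisfies Ω²_M(r_+) = 0. Then the two conditions e²(M) ≥ 0 and (d/dr)Ω²_M(r_+) > 0 hold simultaneously if and only if M_{e=0} ≤ M < M_0, where M_{e=0} := (r_+/2)(1 + (−Λ/3)r_+²) and M_0 := r_+(1 + 2(−Λ/3)r_+²). Moreover, in this case Ω²_M(r) > 0 for all r > r_+, i.e. r_+ is the largest positive root of Ω²_M. -/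
open Real Set

theorem stmt_0 (Λ rp : ℝ) (hΛ : Λ < 0) (hrp : 0 < rp)
    (e2 : ℝ → ℝ) (he2 : ∀ M, e2 M = 2*M*rp - rp^2 - (-Λ/3)*rp^4)
    (Ω2 : ℝ → ℝ → ℝ)
    (hΩ2 : ∀ M r, Ω2 M r = 1 - 2*M/r + e2 M/r^2 + (-Λ/3)*r^2)
    (Me0 M0 : ℝ)
    (hMe0 : Me0 = rp/2 * (1 + (-Λ/3)*rp^2))
    (hM0 : M0 = rp * (1 + 2*(-Λ/3)*rp^2))
    (M : ℝ) :
    Ω2 M rp = 0 ∧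
    ((0 ≤ e2 M ∧ 0 < deriv (Ω2 M) rp) ↔ (Me0 ≤ M ∧ M < M0)) ∧
    ((Me0 ≤ M ∧ M < M0) → ∀ r, rp < r → 0 < Ω2 M r) := by
  have hne : rp ≠ 0 := ne_of_gt hrp
  have ha : (0:ℝ) < -Λ/3 := by linarith
  set a : ℝ := -Λ/3 with hadef
  -- derivative
  have hfun : Ω2 M = fun r => 1 - 2*M*r⁻¹ + e2 M*(r^2)⁻¹ + a*r^2 := by
    funext r
    rw [hΩ2]
    ring
  have hp2 : HasDerivAt (fun r:ℝ => r^2) (2*rp) rp := by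
    simpa using hasDerivAt_pow 2 rp
  have h1 := (hasDerivAt_inv hne).const_mul (2*M)
  have h2 := (hp2.inv (pow_ne_zero 2 hne)).const_mul (e2 M)
  have h3 := hp2.const_mul a
  have hd : HasDerivAt (Ω2 M)
      ((0 - 2*M * (-(rp^2)⁻¹)) + e2 M * (-(2*rp) / (rp^2)^2) + a * (2*rp)) rp := by
    rw [hfun]
    exact (((hasDerivAt_const rp (1:ℝ)).sub h1).add h2).add h3
  have hderiv : deriv (Ω2 M) rp = (2*rp + 4*a*rp^3 - 2*M)/rp^2 := by
    rw [hd.deriv, he2]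
    field_simp
    ring
  refine ⟨?_, ?_, ?_⟩
  · rw [hΩ2, he2]
    field_simp
    ring
  · rw [hderiv, he2, hMe0, hM0]
    constructor
    · rintro ⟨h1', h2'⟩
      have h2'' : 0 < 2*rp + 4*a*rp^3 - 2*M := by
        by_contra h
        push_neg at h
        have := div_nonpos_of_nonpos_of_nonneg h (sq_nonneg rp)
        linarith
      constructor
      · nlinarith
      · nlinarith
    · rintro ⟨h1', h2'⟩
      constructor
      · nlinarith
      · apply div_pos
        · nlinarith
        · positivity
  · rintro ⟨h1', h2'⟩ r hr
    have hrpos : 0 < r := lt_trans hrp hr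
    have hval : Ω2 M r = (a*r^4 + r^2 - 2*M*r + e2 M)/r^2 := by
      rw [hΩ2]
      field_simp
      ring
    rw [hval]
    apply div_pos
    · rw [he2]
      rw [hM0] at h2'
      have hdr : 0 < r - rp := by linarith
      nlinarith [mul_pos hdr hdr, mul_pos (mul_pos hdr hdr) hrpos,
        mul_pos ha (mul_pos hdr (mul_pos hrp (mul_pos hrp hrp))),
        mul_pos hdr (sub_pos.mpr h2'), sq_nonneg (r + rp),
        mul_pos ha (mul_pos hdr hdr)]
    · positivity
end

section
/- Let Λ < 0 and M, e ∈ ℝ. Suppose the quartic P(r) := (−Λ/3)r⁴ + r² − 2Mr + e² has at least two distinct positive roots, and let r_+ be its largest positive root. Then P'(r_+) > 0; equivalently, the surface gravity K_+ := M/r_+² − e²/r_+³ + (−Λ/3)r_+ is strictly positive, and moreover P(r) > 0 for all r > r_+. -/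
open Real Set

theorem stmt_1 (Λ M e rp : ℝ) (hΛ : Λ < 0)
    (P : ℝ → ℝ) (hP : ∀ r, P r = (-Λ/3)*r^4 + r^2 - 2*M*r + e^2)
    (hroots : ∃ r1 r2 : ℝ, 0 < r1 ∧ 0 < r2 ∧ r1 ≠ r2 ∧ P r1 = 0 ∧ P r2 = 0)
    (hrp_pos : 0 < rp) (hrp_root : P rp = 0)
    (hrp_max : ∀ r, 0 < r → P r = 0 → r ≤ rp) :
    0 < deriv P rp ∧ 0 < M/rp^2 - e^2/rp^3 + (-Λ/3)*rp ∧
    ∀ r, rp < r → 0 < P r := by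
  set a : ℝ := -Λ/3 with ha_def
  have ha : 0 < a := by simp only [ha_def]; linarith
  -- get a second positive root r0 < rp
  obtain ⟨r1, r2, hr1, hr2, hne, hP1, hP2⟩ := hroots
  obtain ⟨r0, hr0pos, hr0ne, hPr0⟩ : ∃ r0 : ℝ, 0 < r0 ∧ r0 ≠ rp ∧ P r0 = 0 := by
    by_cases h : r1 = rp
    · exact ⟨r2, hr2, by rw [← h]; exact hne.symm, hP2⟩
    · exact ⟨r1, hr1, h, hP1⟩
  have hr0lt : r0 < rp := lt_of_le_of_ne (hrp_max r0 hr0pos hPr0) hr0ne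
  have h1 : a*rp^4 + rp^2 - 2*M*rp + e^2 = 0 := by rw [← hP rp]; exact hrp_root
  have h2 : a*r0^4 + r0^2 - 2*M*r0 + e^2 = 0 := by rw [← hP r0]; exact hPr0
  -- Vieta-type identities
  have hsub : (rp - r0) * ((rp + r0)*(a*(rp^2 + r0^2) + 1) - 2*M) = 0 := by
    linear_combination h1 - h2
  have key : 2*M = (rp + r0)*(a*(rp^2 + r0^2) + 1) := by
    rcases mul_eq_zero.mp hsub with h | h
    · exact absurd (sub_eq_zero.mp h) (by linarith)
    · linarith
  have hesq : e^2 = rp*r0*(a*(rp^2 + rp*r0 + r0^2) + 1) := by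
    linear_combination h1 + rp * key
  -- derivative computation
  have hPe : P = fun r => a*r^4 + r^2 - 2*M*r + e^2 := funext hP
  have H : HasDerivAt P (4*a*rp^3 + 2*rp - 2*M) rp := by
    rw [hPe]
    have h := ((((hasDerivAt_pow 4 rp).const_mul a).add (hasDerivAt_pow 2 rp)).sub
        ((hasDerivAt_id rp).const_mul (2*M))).add_const (e^2)
    refine h.congr_deriv ?_
    push_cast
    ring
  have hfac : 4*a*rp^3 + 2*rp - 2*M
      = (rp - r0)*(3*a*rp^2 + 2*a*rp*r0 + a*r0^2 + 1) := by
    linear_combination -key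
  have hderivpos : 0 < deriv P rp := by
    rw [H.deriv, hfac]
    have hq : 0 < 3*a*rp^2 + 2*a*rp*r0 + a*r0^2 + 1 := by positivity
    exact mul_pos (by linarith) hq
  refine ⟨hderivpos, ?_, ?_⟩
  · have heq : M/rp^2 - e^2/rp^3 + a*rp = (4*a*rp^3 + 2*rp - 2*M)/(2*rp^2) := by
      field_simp
      linear_combination (-2) * h1
    rw [heq]
    have := hderivpos
    rw [H.deriv] at this
    positivity
  · intro r hr
    have hfacP : P r = (r - rp)*(r - r0)*(a*r^2 + a*(rp + r0)*r
        + (a*(rp^2 + rp*r0 + r0^2) + 1)) := by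
      rw [hP r]
      linear_combination hesq - r * key
    rw [hfacP]
    have hrpos : 0 < r := lt_trans hrp_pos hr
    have hq : 0 < a*r^2 + a*(rp + r0)*r + (a*(rp^2 + rp*r0 + r0^2) + 1) := by positivity
    exact mul_pos (mul_pos (by linarith) (by linarith)) hq
end

section
/- Let r_+ > 0, Δ ∈ (0, 3/2), q₀ ∈ ℝ and L > 0. There exists C > 0 depending only on (r_+, Δ, q₀, L) with the following property: for any R ∈ (r_+, ∞], any ε > 0 and K > 0, and any functions κ ∈ C¹([r_+, R), (0,∞)), φ ∈ C¹([r_+, R)), h ∈ C⁰([r_+, R)) satisfying κ'(r) = κ(r)·(r·φ'(r)² + q₀²·r·κ(r)²·h(r)²·φ(r)²) for all r, together with the bounds 1 ≤ κ(r_+), κ(r) ≤ 2κ(r_+) ≤ 4, |φ(r)| ≤ Kε·r^{−3/2+Δ}, |φ'(r)| ≤ Kε·r^{−5/2+Δ} and |h(r)| ≤ L·r^{−2} for all r ∈ [r_+, R), the function κ is nondecreasing on [r_+, R) and κ(r_+) ≤ κ(r) ≤ κ(r_+)·exp(C·K²·ε²) for all r ∈ [r_+, R). -/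
open Real Set Filter

noncomputable section

/-- The half-open domain `[r_+, R)`, where `R ∈ (r_+, ∞]` is encoded as an `EReal`. -/
def dom (rp : ℝ) (R : EReal) : Set ℝ := {r : ℝ | rp ≤ r ∧ (r : EReal) < R}

lemma dom_convex (rp : ℝ) (R : EReal) : Convex ℝ (dom rp R) := by
  apply Set.OrdConnected.convex
  constructor
  rintro a ⟨ha1, _⟩ b ⟨_, hb2⟩ x ⟨hx1, hx2⟩
  exact ⟨ha1.trans hx1, lt_of_le_of_lt (EReal.coe_le_coe_iff.mpr hx2) hb2⟩

set_option maxHeartbeats 1000000 in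
theorem stmt_3 (rp Δ q0 L : ℝ) (hrp : 0 < rp) (hΔ : Δ ∈ Ioo (0:ℝ) (3/2)) (hL : 0 < L) :
    ∃ C : ℝ, 0 < C ∧ ∀ (R : EReal), (rp : EReal) < R →
      ∀ (ε K : ℝ), 0 < ε → 0 < K →
      ∀ (κ κd φ φd h : ℝ → ℝ),
        (∀ r ∈ dom rp R, HasDerivWithinAt κ (κd r) (dom rp R) r) →
        ContinuousOn κd (dom rp R) →
        (∀ r ∈ dom rp R, HasDerivWithinAt φ (φd r) (dom rp R) r) →
        ContinuousOn φd (dom rp R) →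
        ContinuousOn h (dom rp R) →
        (∀ r ∈ dom rp R, 0 < κ r) →
        (∀ r ∈ dom rp R,
          κd r = κ r * (r * (φd r)^2 + q0^2 * r * (κ r)^2 * (h r)^2 * (φ r)^2)) →
        1 ≤ κ rp →
        (∀ r ∈ dom rp R, κ r ≤ 2 * κ rp) →
        κ rp ≤ 2 →
        (∀ r ∈ dom rp R, |φ r| ≤ K * ε * r ^ (-(3:ℝ)/2 + Δ)) →
        (∀ r ∈ dom rp R, |φd r| ≤ K * ε * r ^ (-(5:ℝ)/2 + Δ)) →
        (∀ r ∈ dom rp R, |h r| ≤ L / r^2) →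
        MonotoneOn κ (dom rp R) ∧
        ∀ r ∈ dom rp R, κ rp ≤ κ r ∧ κ r ≤ κ rp * Real.exp (C * K^2 * ε^2) := by
  have hΔ1 : 0 < Δ := hΔ.1
  have hΔ2 : Δ < 3/2 := hΔ.2
  have h32 : 0 < 3 - 2*Δ := by linarith
  set M0 : ℝ := (1 + 16*q0^2*L^2/rp^2) / (3 - 2*Δ) with hM0
  have hM0pos : 0 < M0 := by
    apply div_pos _ h32
    have : 0 ≤ 16*q0^2*L^2/rp^2 := by positivity
    linarith
  refine ⟨M0 * rp ^ ((-3:ℝ) + 2*Δ), by positivity, ?_⟩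
  intro R hR ε K hε hK κ κd φ φd h hκderiv _ hφderiv _ _ hκpos hode hκrp1 hκ2 hκrp2 hφb hφdb hhb
  have hconv := dom_convex rp R
  have hrpdom : rp ∈ dom rp R := ⟨le_refl _, hR⟩
  -- basic facts at points of dom
  have hxpos : ∀ x ∈ dom rp R, 0 < x := fun x hx => lt_of_lt_of_le hrp hx.1
  have hκcont : ContinuousOn κ (dom rp R) :=
    fun x hx => (hκderiv x hx).continuousWithinAt
  -- interior facts
  have hint : ∀ x ∈ interior (dom rp R), dom rp R ∈ nhds x := by
    intro x hx; exact mem_interior_iff_mem_nhds.mp hx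
  have hκda : ∀ x ∈ interior (dom rp R), HasDerivAt κ (κd x) x := by
    intro x hx
    exact (hκderiv x (interior_subset hx)).hasDerivAt (hint x hx)
  -- κd nonneg on dom
  have hκdnonneg : ∀ x ∈ dom rp R, 0 ≤ κd x := by
    intro x hx
    rw [hode x hx]
    have hx0 := (hxpos x hx).le
    have := (hκpos x hx).le
    positivity
  -- Monotonicity
  have hmono : MonotoneOn κ (dom rp R) := by
    apply monotoneOn_of_hasDerivWithinAt_nonneg hconv hκcont
      (f' := κd)
      (fun x hx => ((hκderiv x (interior_subset hx)).hasDerivAt (hint x hx)).hasDerivWithinAt)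
      (fun x hx => hκdnonneg x (interior_subset hx))
  refine ⟨hmono, ?_⟩
  -- key pointwise bound on κd/κ
  have hkey : ∀ x ∈ dom rp R,
      κd x / κ x ≤ K^2 * ε^2 * (1 + 16*q0^2*L^2/rp^2) * x ^ ((-4:ℝ) + 2*Δ) := by
    intro x hx
    have hx0 : 0 < x := hxpos x hx
    have hκx : 0 < κ x := hκpos x hx
    rw [hode x hx, mul_comm (κ x), mul_div_assoc, div_self (ne_of_gt hκx), mul_one]
    have hb1 : (φd x)^2 ≤ (K*ε)^2 * (x ^ (-(5:ℝ)/2 + Δ))^2 := by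
      have := hφdb x hx
      calc (φd x)^2 = |φd x|^2 := (sq_abs _).symm
        _ ≤ (K * ε * x ^ (-(5:ℝ)/2 + Δ))^2 := by
            apply pow_le_pow_left₀ (abs_nonneg _) this
        _ = (K*ε)^2 * (x ^ (-(5:ℝ)/2 + Δ))^2 := by ring
    have hb2 : (φ x)^2 ≤ (K*ε)^2 * (x ^ (-(3:ℝ)/2 + Δ))^2 := by
      have := hφb x hx
      calc (φ x)^2 = |φ x|^2 := (sq_abs _).symm
        _ ≤ (K * ε * x ^ (-(3:ℝ)/2 + Δ))^2 := by
            apply pow_le_pow_left₀ (abs_nonneg _) this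
        _ = (K*ε)^2 * (x ^ (-(3:ℝ)/2 + Δ))^2 := by ring
    have hb3 : (h x)^2 ≤ (L / x^2)^2 := by
      calc (h x)^2 = |h x|^2 := (sq_abs _).symm
        _ ≤ (L / x^2)^2 := pow_le_pow_left₀ (abs_nonneg _) (hhb x hx) 2
    have hb4 : (κ x)^2 ≤ 16 := by
      have h1 : κ x ≤ 2 * κ rp := hκ2 x hx
      have h2 : κ x ≤ 4 := by linarith
      nlinarith [hκx.le]
    -- rpow identities
    have hfold : ∀ a b : ℝ, 1 + a = b → x * x ^ a = x ^ b := by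
      intro a b hab
      rw [← hab, Real.rpow_add hx0, Real.rpow_one]
    have e1 : x * (x ^ (-(5:ℝ)/2 + Δ))^2 = x ^ ((-4:ℝ) + 2*Δ) := by
      rw [sq, ← Real.rpow_add hx0]
      exact hfold _ _ (by ring)
    have h4 : (1:ℝ) / (x^2)^2 = x ^ ((-4:ℝ)) := by
      rw [← Real.rpow_natCast x 2, ← Real.rpow_natCast _ 2, ← Real.rpow_mul hx0.le,
        Real.rpow_neg hx0.le, one_div]
      norm_num
    have e2 : x * (1 / (x^2)^2) * (x ^ (-(3:ℝ)/2 + Δ))^2 = x ^ ((-6:ℝ) + 2*Δ) := by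
      rw [sq (x ^ (-(3:ℝ)/2 + Δ)), ← Real.rpow_add hx0, h4, mul_assoc,
        ← Real.rpow_add hx0]
      exact hfold _ _ (by ring)
    have e3 : x ^ ((-6:ℝ) + 2*Δ) ≤ x ^ ((-4:ℝ) + 2*Δ) / rp^2 := by
      have hxx : x ^ ((-6:ℝ) + 2*Δ) = x ^ ((-4:ℝ) + 2*Δ) / x^2 := by
        rw [eq_div_iff (by positivity : (x:ℝ)^2 ≠ 0), ← Real.rpow_natCast x 2,
          ← Real.rpow_add hx0]
        congr 1
        push_cast
        ring
      rw [hxx]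
      apply div_le_div_of_nonneg_left (Real.rpow_nonneg hx0.le _) (by positivity)
      nlinarith [hx.1]
    -- term 1
    have t1 : x * (φd x)^2 ≤ K^2*ε^2 * x ^ ((-4:ℝ) + 2*Δ) := by
      calc x * (φd x)^2 ≤ x * ((K*ε)^2 * (x ^ (-(5:ℝ)/2 + Δ))^2) := by
            apply mul_le_mul_of_nonneg_left hb1 hx0.le
        _ = (K*ε)^2 * (x * (x ^ (-(5:ℝ)/2 + Δ))^2) := by ring
        _ = K^2*ε^2 * x ^ ((-4:ℝ) + 2*Δ) := by rw [e1]; ring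
    -- term 2
    have t2 : q0^2 * x * (κ x)^2 * (h x)^2 * (φ x)^2 ≤
        16*q0^2*L^2/rp^2 * (K^2*ε^2) * x ^ ((-4:ℝ) + 2*Δ) := by
      have hAnn : (0:ℝ) ≤ (x ^ (-(3:ℝ)/2 + Δ))^2 := sq_nonneg _
      have m1 : (κ x)^2 * (h x)^2 ≤ 16 * (L/x^2)^2 :=
        mul_le_mul hb4 hb3 (sq_nonneg _) (by norm_num)
      have m2 : (κ x)^2 * (h x)^2 * (φ x)^2 ≤
          16 * (L/x^2)^2 * ((K*ε)^2 * (x ^ (-(3:ℝ)/2 + Δ))^2) :=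
        mul_le_mul m1 hb2 (sq_nonneg _) (by positivity)
      have step1 : q0^2 * x * (κ x)^2 * (h x)^2 * (φ x)^2 ≤
          q0^2 * x * 16 * (L/x^2)^2 * ((K*ε)^2 * (x ^ (-(3:ℝ)/2 + Δ))^2) := by
        calc q0^2 * x * (κ x)^2 * (h x)^2 * (φ x)^2
            = q0^2 * x * ((κ x)^2 * (h x)^2 * (φ x)^2) := by ring
          _ ≤ q0^2 * x * (16 * (L/x^2)^2 * ((K*ε)^2 * (x ^ (-(3:ℝ)/2 + Δ))^2)) :=
              mul_le_mul_of_nonneg_left m2 (by positivity)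
          _ = q0^2 * x * 16 * (L/x^2)^2 * ((K*ε)^2 * (x ^ (-(3:ℝ)/2 + Δ))^2) := by ring
      have step2 : q0^2 * x * 16 * (L/x^2)^2 * ((K*ε)^2 * (x ^ (-(3:ℝ)/2 + Δ))^2)
          = 16*q0^2*L^2 * (K^2*ε^2) * x ^ ((-6:ℝ) + 2*Δ) := by
        rw [← e2]; field_simp
      calc q0^2 * x * (κ x)^2 * (h x)^2 * (φ x)^2
          ≤ 16*q0^2*L^2 * (K^2*ε^2) * x ^ ((-6:ℝ) + 2*Δ) := by rw [← step2]; exact step1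
        _ ≤ 16*q0^2*L^2 * (K^2*ε^2) * (x ^ ((-4:ℝ) + 2*Δ) / rp^2) := by
            apply mul_le_mul_of_nonneg_left e3 (by positivity)
        _ = 16*q0^2*L^2/rp^2 * (K^2*ε^2) * x ^ ((-4:ℝ) + 2*Δ) := by ring
    calc x * (φd x)^2 + q0^2 * x * (κ x)^2 * (h x)^2 * (φ x)^2
        ≤ K^2*ε^2 * x ^ ((-4:ℝ) + 2*Δ) + 16*q0^2*L^2/rp^2 * (K^2*ε^2) * x ^ ((-4:ℝ) + 2*Δ) :=
          add_le_add t1 t2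
      _ = K^2 * ε^2 * (1 + 16*q0^2*L^2/rp^2) * x ^ ((-4:ℝ) + 2*Δ) := by ring
  -- the auxiliary function g
  set M : ℝ := K^2 * ε^2 * M0 with hM
  have hMpos : 0 < M := by positivity
  set g : ℝ → ℝ := fun r => Real.log (κ r) + M * r ^ ((-3:ℝ) + 2*Δ) with hg
  have hganti : AntitoneOn g (dom rp R) := by
    apply antitoneOn_of_hasDerivWithinAt_nonpos hconv
      (f' := fun x => κd x / κ x + M * (((-3:ℝ) + 2*Δ) * x ^ ((-3:ℝ) + 2*Δ - 1)))
    · -- continuity of g on dom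
      apply ContinuousOn.add
      · exact hκcont.log (fun x hx => ne_of_gt (hκpos x hx))
      · exact continuousOn_const.mul (continuousOn_id.rpow_const
          (fun x hx => Or.inl (ne_of_gt (hxpos x hx))))
    · intro x hx
      have hxd := interior_subset hx
      have hx0 : 0 < x := hxpos x hxd
      have hd1 : HasDerivAt (fun r => Real.log (κ r)) (κd x / κ x) x :=
        (hκda x hx).log (ne_of_gt (hκpos x hxd))
      have hd2 : HasDerivAt (fun r : ℝ => r ^ ((-3:ℝ) + 2*Δ))
          (((-3:ℝ) + 2*Δ) * x ^ ((-3:ℝ) + 2*Δ - 1)) x :=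
        Real.hasDerivAt_rpow_const (Or.inl (ne_of_gt hx0))
      exact ((hd1.add (hd2.const_mul M)).hasDerivWithinAt)
    · intro x hx
      have hxd := interior_subset hx
      have hx0 : 0 < x := hxpos x hxd
      have hk := hkey x hxd
      have e4 : (-3:ℝ) + 2*Δ - 1 = (-4:ℝ) + 2*Δ := by ring
      rw [e4]
      have : M * (((-3:ℝ) + 2*Δ) * x ^ ((-4:ℝ) + 2*Δ))
          = -(K^2 * ε^2 * (1 + 16*q0^2*L^2/rp^2) * x ^ ((-4:ℝ) + 2*Δ)) := by
        rw [hM, hM0]; field_simp; ring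
      rw [this]
      linarith
  intro r hr
  refine ⟨hmono hrpdom hr hr.1, ?_⟩
  have hgle : g r ≤ g rp := hganti hrpdom hr hr.1
  have hrpow_nonneg : 0 ≤ M * r ^ ((-3:ℝ) + 2*Δ) :=
    mul_nonneg hMpos.le (Real.rpow_nonneg (hxpos r hr).le _)
  have hlog : Real.log (κ r) ≤ Real.log (κ rp) + M * rp ^ ((-3:ℝ) + 2*Δ) := by
    simp only [hg] at hgle
    linarith
  have hMrp : M * rp ^ ((-3:ℝ) + 2*Δ) = M0 * rp ^ ((-3:ℝ) + 2*Δ) * K^2 * ε^2 := by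
    rw [hM]; ring
  have hκrpos : 0 < κ rp := hκpos rp hrpdom
  have hκr : 0 < κ r := hκpos r hr
  calc κ r = Real.exp (Real.log (κ r)) := (Real.exp_log hκr).symm
    _ ≤ Real.exp (Real.log (κ rp) + M0 * rp ^ ((-3:ℝ) + 2*Δ) * K^2 * ε^2) := by
        apply Real.exp_le_exp.mpr; rw [← hMrp]; exact hlog
    _ = κ rp * Real.exp (M0 * rp ^ ((-3:ℝ) + 2*Δ) * K^2 * ε^2) := by
        rw [Real.exp_add, Real.exp_log hκrpos]
end
end

section
/- Let r_+ > 0, Λ < 0, α < 0, Δ ∈ (0, 3/2), q₀ ∈ ℝ and L > 0. There exists C > 0 depending only on (r_+, Λ, α, Δ, q₀, L) such that: for any R ∈ (r_+, ∞], ε > 0, K > 0 with K²ε² ≤ 1, M ∈ ℝ with |M| ≤ L, and functions ϖ ∈ C¹([r_+, R)), κ, φ ∈ C¹([r_+, R)), Q, h ∈ C⁰([r_+, R)) satisfying ϖ(r_+) = M and the transport equation ϖ'(r) = (−Λ/3)·α·r²φ(r)²/2 + (1 − 2ϖ(r)/r + Q(r)²/r² + (−Λ/3)r²)·(r²φ'(r)²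 + q₀²·h(r)²·κ(r)²·r²·φ(r)²)/2 + q₀²·Q(r)·r·h(r)·κ(r)·φ(r)², together with the bounds 1 ≤ κ(r) ≤ 4, |Q(r)| ≤ L, |φ(r)| ≤ Kε·r^{−3/2+Δ}, |φ'(r)| ≤ Kε·r^{−5/2+Δ} and |h(r)| ≤ L·r^{−2} for all r ∈ [r_+, R), one has |ϖ(r) − M| ≤ C·K²·ε²·r^{2Δ−1}·(r − r_+) for all r ∈ [r_+, R). -/
open Real Set Filter Topology

noncomputable section

lemma aux_one_sub_rpow {p t : ℝ} (hp3 : p ≤ 3) (ht0 : 0 < t) (ht1 : t ≤ 1) :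
    1 - t ^ p ≤ 3 * (1 - t) := by
  rcases le_or_gt p 1 with hcase | hcase
  · have h1 : t ^ (1:ℝ) ≤ t ^ p := Real.rpow_le_rpow_of_exponent_ge ht0 ht1 hcase
    rw [Real.rpow_one] at h1
    nlinarith
  · have hb : 1 + p * (t - 1) ≤ (1 + (t - 1)) ^ p :=
      one_add_mul_self_le_rpow_one_add (by linarith) hcase.le
    have he : (1 + (t - 1)) = t := by ring
    rw [he] at hb
    nlinarith

lemma aux_rpow_diff {p a b : ℝ} (hp3 : p ≤ 3) (ha : 0 < a) (hab : a ≤ b) :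
    b ^ p - a ^ p ≤ 3 * b ^ (p - 1) * (b - a) := by
  have hb : 0 < b := lt_of_lt_of_le ha hab
  have ht0 : 0 < a / b := div_pos ha hb
  have ht1 : a / b ≤ 1 := (div_le_one hb).2 hab
  have h1 := aux_one_sub_rpow hp3 ht0 ht1
  have hbp : (0:ℝ) < b ^ p := Real.rpow_pos_of_pos hb p
  have key := mul_le_mul_of_nonneg_left h1 hbp.le
  rw [Real.div_rpow ha.le hb.le] at key
  have e2 : b ^ (p - 1) * b = b ^ p := by
    rw [← Real.rpow_add_one hb.ne' (p - 1)]
    congr 1; ring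
  calc b ^ p - a ^ p = b ^ p * (1 - a ^ p / b ^ p) := by field_simp
    _ ≤ b ^ p * (3 * (1 - a / b)) := key
    _ = 3 * b ^ (p - 1) * (b - a) := by rw [← e2]; field_simp

set_option maxHeartbeats 2000000 in
theorem stmt_5 (rp Λ α Δ q0 L : ℝ) (hrp : 0 < rp) (hΛ : Λ < 0) (hα : α < 0)
    (hΔ : Δ ∈ Ioo (0:ℝ) (3/2)) (hL : 0 < L) :
    ∃ C : ℝ, 0 < C ∧ ∀ (R : EReal), (rp : EReal) < R →
      ∀ (ε K M : ℝ), 0 < ε → 0 < K → K^2 * ε^2 ≤ 1 → |M| ≤ L →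
      ∀ (ϖ ϖd κ κd φ φd Q h : ℝ → ℝ),
        (∀ r ∈ dom rp R, HasDerivWithinAt ϖ (ϖd r) (dom rp R) r) →
        ContinuousOn ϖd (dom rp R) →
        (∀ r ∈ dom rp R, HasDerivWithinAt κ (κd r) (dom rp R) r) →
        ContinuousOn κd (dom rp R) →
        (∀ r ∈ dom rp R, HasDerivWithinAt φ (φd r) (dom rp R) r) →
        ContinuousOn φd (dom rp R) →
        ContinuousOn Q (dom rp R) →
        ContinuousOn h (dom rp R) →
        ϖ rp = M →
        (∀ r ∈ dom rp R, ϖd r =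
          (-Λ/3) * α * r^2 * (φ r)^2 / 2
          + (1 - 2*ϖ r/r + (Q r)^2/r^2 + (-Λ/3)*r^2)
            * (r^2 * (φd r)^2 + q0^2 * (h r)^2 * (κ r)^2 * r^2 * (φ r)^2) / 2
          + q0^2 * Q r * r * h r * κ r * (φ r)^2) →
        (∀ r ∈ dom rp R, 1 ≤ κ r ∧ κ r ≤ 4) →
        (∀ r ∈ dom rp R, |Q r| ≤ L) →
        (∀ r ∈ dom rp R, |φ r| ≤ K * ε * r ^ (-(3:ℝ)/2 + Δ)) →
        (∀ r ∈ dom rp R, |φd r| ≤ K * ε * r ^ (-(5:ℝ)/2 + Δ)) →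
        (∀ r ∈ dom rp R, |h r| ≤ L / r^2) →
        ∀ r ∈ dom rp R, |ϖ r - M| ≤ C * K^2 * ε^2 * r ^ (2*Δ - 1) * (r - rp) := by
  obtain ⟨hΔ0, hΔ32⟩ := hΔ
  obtain ⟨lam, hlam_def⟩ : ∃ y : ℝ, y = -Λ/3 := ⟨_, rfl⟩
  have hlam : 0 < lam := by rw [hlam_def]; linarith
  obtain ⟨cg, hcg_def⟩ : ∃ y : ℝ, y = 1 + 16*q0^2*L^2/rp^2 := ⟨_, rfl⟩
  have hcg0 : 0 < cg := by rw [hcg_def]; positivity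
  have habs : 0 < |α| := abs_pos.2 (ne_of_lt hα)
  have hco : (0:ℝ) ≤ 1 + 2*L/rp + L^2/rp^2 := by
    have h1 : (0:ℝ) ≤ 2*L/rp := div_nonneg (by linarith) hrp.le
    have h2 : (0:ℝ) ≤ L^2/rp^2 := div_nonneg (sq_nonneg L) (sq_nonneg rp)
    linarith
  obtain ⟨c2, hc2_def⟩ : ∃ y : ℝ, y = lam*|α|/2 + lam*cg/2
      + ((1 + 2*L/rp + L^2/rp^2)*cg/2 + 4*q0^2*L^2/rp)/rp^2 := ⟨_, rfl⟩
  have hc2 : 0 < c2 := by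
    have h1 : 0 < lam*|α|/2 := div_pos (mul_pos hlam habs) two_pos
    have h2 : (0:ℝ) ≤ lam*cg/2 := div_nonneg (mul_nonneg hlam.le hcg0.le) (by norm_num)
    have h3 : (0:ℝ) ≤ ((1 + 2*L/rp + L^2/rp^2)*cg/2 + 4*q0^2*L^2/rp)/rp^2 := by
      apply div_nonneg _ (sq_nonneg rp)
      have h4 : (0:ℝ) ≤ (1 + 2*L/rp + L^2/rp^2)*cg/2 :=
        div_nonneg (mul_nonneg hco hcg0.le) (by norm_num)
      have h5 : (0:ℝ) ≤ 4*q0^2*L^2/rp := div_nonneg (by positivity) hrp.le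
      linarith
    rw [hc2_def]; linarith
  have h2Δ : (0:ℝ) < 2*Δ := by linarith
  refine ⟨3*(c2+1)/(2*Δ), div_pos (by linarith) h2Δ, ?_⟩
  intro R hR ε K M hε hK hKε hM ϖ ϖd κ κd φ φd Q h hϖ hϖdc hκ hκdc hφ hφdc hQc hhc
    hinit hode hκb hQb hφb hφdb hhb r hrdom
  obtain ⟨hrpr, hrR⟩ := hrdom
  obtain ⟨P, hP_def⟩ : ∃ y : ℝ, y = K * ε := ⟨_, rfl⟩
  have hP : 0 < P := by rw [hP_def]; exact mul_pos hK hε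
  have hsub : Icc rp r ⊆ dom rp R := fun y hy =>
    ⟨hy.1, lt_of_le_of_lt (EReal.coe_le_coe_iff.2 hy.2) hrR⟩
  -- a real number beyond r but within R
  obtain ⟨c, hrc, hcR⟩ : ∃ c : ℝ, r < c ∧ (c : EReal) ≤ R := by
    by_cases hT : R = ⊤
    · exact ⟨r + 1, by linarith, by rw [hT]; exact le_top⟩
    · have hB' : R ≠ ⊥ := ne_bot_of_gt hR
      refine ⟨R.toReal, ?_, ?_⟩
      · rw [← EReal.coe_lt_coe_iff, EReal.coe_toReal hT hB']; exact hrR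
      · rw [EReal.coe_toReal hT hB']
  have hIcoSub : ∀ x ∈ Ico rp r, dom rp R ∈ 𝓝[Ici x] x := by
    intro x hx
    have h1 : Iio c ∈ 𝓝 x := Iio_mem_nhds (lt_trans hx.2 hrc)
    have h2 : Ici x ∩ Iio c ⊆ dom rp R := fun y hy =>
      ⟨le_trans hx.1 hy.1, lt_of_lt_of_le (EReal.coe_lt_coe_iff.2 hy.2) hcR⟩
    exact mem_of_superset (inter_mem self_mem_nhdsWithin (mem_nhdsWithin_of_mem_nhds h1)) h2
  have hϖIci : ∀ x ∈ Ico rp r, HasDerivWithinAt ϖ (ϖd x) (Ici x) x := fun x hx =>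
    (hϖ x (hsub ⟨hx.1, hx.2.le⟩)).mono_of_mem_nhdsWithin (hIcoSub x hx)
  have hϖcont : ContinuousOn ϖ (Icc rp r) := fun x hx =>
    ((hϖ x (hsub hx)).continuousWithinAt).mono hsub
  obtain ⟨g, hg_def⟩ : ∃ g : ℝ → ℝ,
      g = fun x => x^2 * (φd x)^2 + q0^2 * (h x)^2 * (κ x)^2 * x^2 * (φ x)^2 := ⟨_, rfl⟩
  obtain ⟨T, hT_def⟩ : ∃ T : ℝ → ℝ, T = fun x => lam * α * x^2 * (φ x)^2 / 2
      + (1 - 2*M/x + (Q x)^2/x^2 + lam*x^2) * g x / 2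
      + q0^2 * Q x * x * h x * κ x * (φ x)^2 := ⟨_, rfl⟩
  have hg_nonneg : ∀ x, 0 ≤ g x := by
    intro x; simp only [hg_def]; positivity
  have hTid : ∀ x ∈ dom rp R, ϖd x = T x - (ϖ x - M) * g x / x := by
    intro x hx
    have hx0 : (0:ℝ) < x := lt_of_lt_of_le hrp hx.1
    rw [hode x hx]
    simp only [hT_def, hg_def, hlam_def]
    field_simp
    ring
  -- central pointwise bound
  have hkey : ∀ x ∈ dom rp R, |T x| ≤ c2 * P^2 * x ^ (2*Δ - 1) := by
    intro x hx
    have hxrp : rp ≤ x := hx.1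
    have hx0 : (0:ℝ) < x := lt_of_lt_of_le hrp hxrp
    obtain ⟨u, hu_def⟩ : ∃ y : ℝ, y = x ^ (-(3:ℝ)/2 + Δ) := ⟨_, rfl⟩
    have hu : 0 < u := by rw [hu_def]; exact Real.rpow_pos_of_pos hx0 _
    have e1 : u^2 = x ^ (2*Δ - 3) := by
      rw [hu_def, pow_two, ← Real.rpow_add hx0]
      congr 1; ring
    have e2 : x ^ (2*Δ - 1) = x^2 * u^2 := by
      rw [e1, ← Real.rpow_natCast x 2, ← Real.rpow_add hx0]
      congr 1; push_cast; ring
    have hφx : |φ x| ≤ P * u := by rw [hP_def, hu_def]; exact hφb x hx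
    have hφdx : |φd x| ≤ P * u / x := by
      have h5 : x ^ (-(5:ℝ)/2 + Δ) = u / x := by
        have he : (-(5:ℝ)/2 + Δ) = (-(3:ℝ)/2 + Δ) - 1 := by ring
        rw [he, Real.rpow_sub hx0, Real.rpow_one, hu_def]
      have h6 := hφdb x hx
      rw [h5] at h6
      rw [hP_def]
      calc |φd x| ≤ K * ε * (u / x) := h6
        _ = K * ε * u / x := by ring
    have hφ2 : (φ x)^2 ≤ P^2 * u^2 := by
      have hh1 := mul_self_le_mul_self (abs_nonneg (φ x)) hφx
      rw [abs_mul_abs_self] at hh1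
      calc (φ x)^2 = φ x * φ x := pow_two _
        _ ≤ (P * u) * (P * u) := hh1
        _ = P^2 * u^2 := by ring
    have hφd2 : (φd x)^2 ≤ P^2 * u^2 / x^2 := by
      have hh1 := mul_self_le_mul_self (abs_nonneg (φd x)) hφdx
      rw [abs_mul_abs_self] at hh1
      have hx2 : (0:ℝ) < x^2 := pow_pos hx0 2
      rw [le_div_iff₀ hx2]
      calc (φd x)^2 * x^2 = (φd x * φd x) * x^2 := by ring
        _ ≤ ((P * u / x) * (P * u / x)) * x^2 := mul_le_mul_of_nonneg_right hh1 (sq_nonneg x)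
        _ = P^2 * u^2 := by field_simp
    have hh2 : (h x)^2 ≤ (L/x^2)^2 := by
      have hh1 := mul_self_le_mul_self (abs_nonneg (h x)) (hhb x hx)
      rw [abs_mul_abs_self] at hh1
      calc (h x)^2 = h x * h x := pow_two _
        _ ≤ (L/x^2) * (L/x^2) := hh1
        _ = (L/x^2)^2 := by ring
    have hκ1 : 1 ≤ κ x := (hκb x hx).1
    have hκ4 : κ x ≤ 4 := (hκb x hx).2
    have hκ2 : (κ x)^2 ≤ 16 := by
      calc (κ x)^2 = κ x * κ x := pow_two _
        _ ≤ 4 * 4 := mul_le_mul hκ4 hκ4 (by linarith) (by norm_num)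
        _ = 16 := by norm_num
    have hQ1 : |Q x| ≤ L := hQb x hx
    have hQ2 : (Q x)^2 ≤ L^2 := by
      have hh1 := mul_self_le_mul_self (abs_nonneg (Q x)) hQ1
      rw [abs_mul_abs_self] at hh1
      calc (Q x)^2 = Q x * Q x := pow_two _
        _ ≤ L * L := hh1
        _ = L^2 := by ring
    -- bound on g
    have hgA : x^2 * (φd x)^2 ≤ P^2 * u^2 := by
      have h1 := mul_le_mul_of_nonneg_left hφd2 (sq_nonneg x)
      have he : x^2 * (P^2 * u^2 / x^2) = P^2 * u^2 := by field_simp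
      rw [he] at h1; exact h1
    have hgB : q0^2 * (h x)^2 * (κ x)^2 * x^2 * (φ x)^2 ≤ 16*q0^2*L^2/rp^2 * (P^2*u^2) := by
      have h1 : (h x)^2 * (κ x)^2 ≤ (L/x^2)^2 * 16 :=
        mul_le_mul hh2 hκ2 (sq_nonneg _) (by positivity)
      have h2 : (h x)^2 * (κ x)^2 * (φ x)^2 ≤ (L/x^2)^2 * 16 * (P^2*u^2) :=
        mul_le_mul h1 hφ2 (sq_nonneg _) (by positivity)
      have h3 : q0^2 * x^2 * ((h x)^2 * (κ x)^2 * (φ x)^2)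
          ≤ q0^2 * x^2 * ((L/x^2)^2 * 16 * (P^2*u^2)) :=
        mul_le_mul_of_nonneg_left h2 (by positivity)
      have he : q0^2 * x^2 * ((L/x^2)^2 * 16 * (P^2*u^2)) = 16*q0^2*L^2/x^2 * (P^2*u^2) := by
        field_simp
      rw [he] at h3
      have h4 : 16*q0^2*L^2/x^2 * (P^2*u^2) ≤ 16*q0^2*L^2/rp^2 * (P^2*u^2) := by
        apply mul_le_mul_of_nonneg_right _ (by positivity)
        apply div_le_div_of_nonneg_left (by positivity) (pow_pos hrp 2)
        exact pow_le_pow_left₀ hrp.le hxrp 2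
      calc q0^2 * (h x)^2 * (κ x)^2 * x^2 * (φ x)^2
          = q0^2 * x^2 * ((h x)^2 * (κ x)^2 * (φ x)^2) := by ring
        _ ≤ 16*q0^2*L^2/x^2 * (P^2*u^2) := h3
        _ ≤ 16*q0^2*L^2/rp^2 * (P^2*u^2) := h4
    have hgx : g x ≤ cg * (P^2*u^2) := by
      simp only [hg_def]
      rw [hcg_def]
      have he : (1 + 16*q0^2*L^2/rp^2) * (P^2*u^2)
          = P^2*u^2 + 16*q0^2*L^2/rp^2 * (P^2*u^2) := by ring
      rw [he]
      exact add_le_add hgA hgB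
    -- term bounds
    have ht1 : |lam * α * x^2 * (φ x)^2 / 2| ≤ lam*|α|/2 * (P^2*(x^2*u^2)) := by
      have he : |lam * α * x^2 * (φ x)^2 / 2| = lam * |α| * x^2 * (φ x)^2 / 2 := by
        rw [abs_div, abs_mul, abs_mul, abs_mul, abs_of_pos hlam,
          abs_of_nonneg (sq_nonneg x), abs_of_nonneg (sq_nonneg (φ x))]
        norm_num
      rw [he]
      have h1 := mul_le_mul_of_nonneg_left hφ2
        (div_nonneg (mul_nonneg (mul_nonneg hlam.le (abs_nonneg α)) (sq_nonneg x))
          (by norm_num : (0:ℝ) ≤ 2))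
      calc lam * |α| * x^2 * (φ x)^2 / 2 = lam * |α| * x^2 / 2 * (φ x)^2 := by ring
        _ ≤ lam * |α| * x^2 / 2 * (P^2 * u^2) := h1
        _ = lam*|α|/2 * (P^2*(x^2*u^2)) := by ring
    have hlamx2 : (0:ℝ) ≤ lam*x^2 := mul_nonneg hlam.le (sq_nonneg x)
    have hcoef : |1 - 2*M/x + (Q x)^2/x^2 + lam*x^2| ≤ (1 + 2*L/rp + L^2/rp^2) + lam*x^2 := by
      have h1 : |2*M/x| ≤ 2*L/rp := by
        rw [abs_div, abs_mul, abs_of_pos hx0]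
        apply div_le_div₀ (by linarith) _ hrp hxrp
        rw [abs_two]
        linarith [hM]
      have h1' := abs_le.1 h1
      have h2 : (Q x)^2/x^2 ≤ L^2/rp^2 :=
        div_le_div₀ (sq_nonneg L) hQ2 (pow_pos hrp 2) (pow_le_pow_left₀ hrp.le hxrp 2)
      have h3 : (0:ℝ) ≤ (Q x)^2/x^2 := by positivity
      rw [abs_le]
      constructor <;> linarith
    have hcoefnn : (0:ℝ) ≤ (1 + 2*L/rp + L^2/rp^2) + lam*x^2 := by linarith
    have ht2 : |(1 - 2*M/x + (Q x)^2/x^2 + lam*x^2) * g x / 2|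
        ≤ ((1 + 2*L/rp + L^2/rp^2) + lam*x^2) * (cg * (P^2*u^2)) / 2 := by
      rw [abs_div, abs_mul, abs_of_nonneg (hg_nonneg x), abs_two]
      apply div_le_div₀ _ _ (by norm_num) le_rfl
      · exact mul_nonneg hcoefnn (mul_nonneg hcg0.le (by positivity))
      · exact mul_le_mul hcoef hgx (hg_nonneg x) hcoefnn
    have ht3 : |q0^2 * Q x * x * h x * κ x * (φ x)^2| ≤ 4*q0^2*L^2/rp * (P^2*u^2) := by
      have he : |q0^2 * Q x * x * h x * κ x * (φ x)^2|
          = q0^2 * |Q x| * x * |h x| * κ x * (φ x)^2 := by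
        rw [abs_mul, abs_mul, abs_mul, abs_mul, abs_mul, abs_of_nonneg (sq_nonneg q0),
          abs_of_pos hx0, abs_of_pos (lt_of_lt_of_le one_pos hκ1),
          abs_of_nonneg (sq_nonneg (φ x))]
      rw [he]
      have hhx := hhb x hx
      have hLx2 : (0:ℝ) ≤ L * (L/x^2) := mul_nonneg hL.le (div_nonneg hL.le (sq_nonneg x))
      have b1 : q0^2 * |Q x| * x * |h x| * κ x * (φ x)^2
          ≤ q0^2 * L * x * (L/x^2) * 4 * (P^2*u^2) := by
        have m1 : |Q x| * |h x| ≤ L * (L/x^2) :=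
          mul_le_mul hQ1 hhx (abs_nonneg _) hL.le
        have m2 : |Q x| * |h x| * κ x ≤ L * (L/x^2) * 4 :=
          mul_le_mul m1 hκ4 (by linarith) hLx2
        have s1 : |Q x| * |h x| * κ x * (φ x)^2 ≤ L * (L/x^2) * 4 * (P^2*u^2) :=
          mul_le_mul m2 hφ2 (sq_nonneg _) (by linarith)
        have h6 := mul_le_mul_of_nonneg_left s1
          (mul_nonneg (sq_nonneg q0) hx0.le)
        calc q0^2 * |Q x| * x * |h x| * κ x * (φ x)^2
            = q0^2 * x * (|Q x| * |h x| * κ x * (φ x)^2) := by ring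
          _ ≤ q0^2 * x * (L * (L/x^2) * 4 * (P^2*u^2)) := h6
          _ = q0^2 * L * x * (L/x^2) * 4 * (P^2*u^2) := by ring
      have b2 : q0^2 * L * x * (L/x^2) * 4 * (P^2*u^2) ≤ 4*q0^2*L^2/rp * (P^2*u^2) := by
        apply mul_le_mul_of_nonneg_right _ (by positivity)
        have he2 : q0^2 * L * x * (L/x^2) * 4 = 4*q0^2*L^2/x := by field_simp
        rw [he2]
        exact div_le_div_of_nonneg_left (by positivity) hrp hxrp
      linarith
    -- combine
    have htri : |T x| ≤ |lam * α * x^2 * (φ x)^2 / 2|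
        + |(1 - 2*M/x + (Q x)^2/x^2 + lam*x^2) * g x / 2|
        + |q0^2 * Q x * x * h x * κ x * (φ x)^2| := by
      simp only [hT_def]
      exact (abs_add_le _ _).trans (add_le_add_left (abs_add_le _ _) _)
    have huu : u^2 ≤ x^2*u^2/rp^2 := by
      rw [le_div_iff₀ (pow_pos hrp 2)]
      have h9 : rp^2 * u^2 ≤ x^2 * u^2 :=
        mul_le_mul_of_nonneg_right (pow_le_pow_left₀ hrp.le hxrp 2) (sq_nonneg u)
      linarith
    rw [e2]
    have hAu : P^2*u^2 ≤ P^2*(x^2*u^2)/rp^2 := by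
      have h9 := mul_le_mul_of_nonneg_left huu (sq_nonneg P)
      calc P^2*u^2 ≤ P^2*(x^2*u^2/rp^2) := h9
        _ = P^2*(x^2*u^2)/rp^2 := by ring
    have hS : (0:ℝ) ≤ (1 + 2*L/rp + L^2/rp^2)*cg/2 + 4*q0^2*L^2/rp := by
      have h4 : (0:ℝ) ≤ (1 + 2*L/rp + L^2/rp^2)*cg/2 :=
        div_nonneg (mul_nonneg hco hcg0.le) (by norm_num)
      have h5 : (0:ℝ) ≤ 4*q0^2*L^2/rp := div_nonneg (by positivity) hrp.le
      linarith
    calc |T x| ≤ lam*|α|/2 * (P^2*(x^2*u^2))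
          + ((1 + 2*L/rp + L^2/rp^2) + lam*x^2) * (cg * (P^2*u^2)) / 2
          + 4*q0^2*L^2/rp * (P^2*u^2) :=
        htri.trans (add_le_add (add_le_add ht1 ht2) ht3)
      _ = (lam*|α|/2 + lam*cg/2) * (P^2*(x^2*u^2))
          + ((1 + 2*L/rp + L^2/rp^2)*cg/2 + 4*q0^2*L^2/rp) * (P^2*u^2) := by ring
      _ ≤ (lam*|α|/2 + lam*cg/2) * (P^2*(x^2*u^2))
          + ((1 + 2*L/rp + L^2/rp^2)*cg/2 + 4*q0^2*L^2/rp) * (P^2*(x^2*u^2)/rp^2) :=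
        add_le_add_right (mul_le_mul_of_nonneg_left hAu hS) _
      _ = c2 * (P^2*(x^2*u^2)) := by rw [hc2_def]; ring
      _ = c2 * P^2 * (x^2*u^2) := by ring
  -- barrier argument
  have hboth : ∀ η : ℝ, 0 < η →
      |ϖ r - M| ≤ (c2+1)*P^2 * ((r ^ (2*Δ) - rp ^ (2*Δ))/(2*Δ)) + η := by
    intro η hη
    obtain ⟨B, hB_def⟩ : ∃ B : ℝ → ℝ,
        B = fun s => (c2+1)*P^2 * ((s ^ (2*Δ) - rp ^ (2*Δ))/(2*Δ)) + η := ⟨_, rfl⟩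
    obtain ⟨B', hB'_def⟩ : ∃ B' : ℝ → ℝ,
        B' = fun s => (c2+1)*P^2 * s ^ (2*Δ - 1) := ⟨_, rfl⟩
    have hBd : ∀ s, rp ≤ s → HasDerivAt B (B' s) s := by
      intro s hs
      have hs0 : s ≠ 0 := (lt_of_lt_of_le hrp hs).ne'
      have h1 : HasDerivAt (fun y : ℝ => y ^ (2*Δ)) (2*Δ * s ^ (2*Δ-1)) s :=
        Real.hasDerivAt_rpow_const (Or.inl hs0)
      have h2 := (((h1.sub_const (rp ^ (2*Δ))).div_const (2*Δ)).const_mul ((c2+1)*P^2)).add_const η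
      have h3 : (c2+1)*P^2 * (2*Δ * s ^ (2*Δ-1) / (2*Δ)) = B' s := by
        simp only [hB'_def]
        rw [mul_comm (2*Δ) (s ^ (2*Δ-1)), mul_div_assoc, div_self h2Δ.ne', mul_one]
      rw [hB_def, ← h3]
      exact h2
    have hBcont : ContinuousOn B (Icc rp r) := fun s hs =>
      (hBd s hs.1).continuousAt.continuousWithinAt
    have hBrp : B rp = η := by simp [hB_def]
    have hBpos : ∀ x ∈ Ico rp r, 0 < B x := by
      intro x hx
      have h1 : (0:ℝ) ≤ x ^ (2*Δ) - rp ^ (2*Δ) :=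
        sub_nonneg.2 (Real.rpow_le_rpow hrp.le hx.1 h2Δ.le)
      have h2 : (0:ℝ) ≤ (c2+1)*P^2 * ((x ^ (2*Δ) - rp ^ (2*Δ))/(2*Δ)) :=
        mul_nonneg (mul_nonneg (by linarith) (sq_nonneg P)) (div_nonneg h1 h2Δ.le)
      simp only [hB_def]
      linarith
    have hB'gt : ∀ x ∈ Ico rp r, c2 * P^2 * x ^ (2*Δ-1) < B' x := by
      intro x hx
      have hx0 : (0:ℝ) < x := lt_of_lt_of_le hrp hx.1
      have h3 : 0 < P^2 * x ^ (2*Δ-1) :=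
        mul_pos (pow_pos hP 2) (Real.rpow_pos_of_pos hx0 _)
      simp only [hB'_def]
      linarith [h3]
    -- upper barrier
    have hup : ∀ ⦃x⦄, x ∈ Icc rp r → ϖ x - M ≤ B x := by
      apply image_le_of_deriv_right_lt_deriv_boundary' (f' := ϖd)
        (hϖcont.sub continuousOn_const)
        (fun x hx => (hϖIci x hx).sub_const M)
        (by simp only [Pi.sub_apply]; rw [hinit, hBrp]; simp only [sub_self]; linarith)
        hBcont
        (fun x hx => (hBd x hx.1).hasDerivWithinAt)
      intro x hx hbx
      have hxd : x ∈ dom rp R := hsub ⟨hx.1, hx.2.le⟩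
      have hx0 : (0:ℝ) < x := lt_of_lt_of_le hrp hx.1
      have hψpos : 0 < ϖ x - M := by simp only [Pi.sub_apply] at hbx; exact hbx ▸ hBpos x hx
      rw [hTid x hxd]
      have h1 : 0 ≤ (ϖ x - M) * g x / x :=
        div_nonneg (mul_nonneg hψpos.le (hg_nonneg x)) hx0.le
      calc T x - (ϖ x - M) * g x / x ≤ T x := by linarith
        _ ≤ |T x| := le_abs_self _
        _ ≤ c2 * P^2 * x ^ (2*Δ-1) := hkey x hxd
        _ < B' x := hB'gt x hx
    -- lower barrier
    have hdown : ∀ ⦃x⦄, x ∈ Icc rp r → M - ϖ x ≤ B x := by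
      apply image_le_of_deriv_right_lt_deriv_boundary' (f' := fun s => -ϖd s)
        (continuousOn_const.sub hϖcont)
        (fun x hx => (hϖIci x hx).const_sub M)
        (by simp only [Pi.sub_apply]; rw [hinit, hBrp]; simp only [sub_self]; linarith)
        hBcont
        (fun x hx => (hBd x hx.1).hasDerivWithinAt)
      intro x hx hbx
      have hxd : x ∈ dom rp R := hsub ⟨hx.1, hx.2.le⟩
      have hx0 : (0:ℝ) < x := lt_of_lt_of_le hrp hx.1
      have hψneg : ϖ x - M < 0 := by
        have h9 := hBpos x hx
        simp only [Pi.sub_apply] at hbx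
        linarith [hbx]
      rw [hTid x hxd]
      have h1 : (ϖ x - M) * g x / x ≤ 0 :=
        div_nonpos_of_nonpos_of_nonneg
          (mul_nonpos_of_nonpos_of_nonneg hψneg.le (hg_nonneg x)) hx0.le
      calc -(T x - (ϖ x - M) * g x / x) = -T x + (ϖ x - M) * g x / x := by ring
        _ ≤ |T x| := by linarith [neg_abs_le (T x)]
        _ ≤ c2 * P^2 * x ^ (2*Δ-1) := hkey x hxd
        _ < B' x := hB'gt x hx
    have hrIcc : r ∈ Icc rp r := ⟨hrpr, le_refl r⟩
    have h1 := hup hrIcc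
    have h2 := hdown hrIcc
    rw [abs_le]
    simp only [hB_def] at h1 h2
    constructor <;> linarith
  -- pass to the limit η → 0
  have hD : |ϖ r - M| ≤ (c2+1)*P^2 * ((r ^ (2*Δ) - rp ^ (2*Δ))/(2*Δ)) := by
    by_contra hcon
    push_neg at hcon
    have h9 := hboth ((|ϖ r - M| - (c2+1)*P^2 * ((r ^ (2*Δ) - rp ^ (2*Δ))/(2*Δ)))/2)
      (by linarith)
    linarith
  -- final comparison
  have hdiff : r ^ (2*Δ) - rp ^ (2*Δ) ≤ 3 * r ^ (2*Δ - 1) * (r - rp) :=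
    aux_rpow_diff (by linarith) hrp hrpr
  have h6 : (c2+1)*P^2 * ((r ^ (2*Δ) - rp ^ (2*Δ))/(2*Δ))
      ≤ (c2+1)*P^2 * ((3 * r ^ (2*Δ - 1) * (r - rp))/(2*Δ)) := by
    apply mul_le_mul_of_nonneg_left _ (mul_nonneg (by linarith) (sq_nonneg P))
    exact (div_le_div_iff_of_pos_right h2Δ).2 hdiff
  have h7 : (c2+1)*P^2 * ((3 * r ^ (2*Δ - 1) * (r - rp))/(2*Δ))
      = 3*(c2+1)/(2*Δ) * K^2 * ε^2 * r ^ (2*Δ - 1) * (r - rp) := by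
    rw [hP_def]
    field_simp
  linarith
end
end

section
/- Let Λ < 0, α, q₀ ∈ ℝ, and let I ⊆ (0, ∞) be an open interval. Suppose κ, ϖ, Q, A, φ ∈ C¹(I) with κ > 0 satisfy on I the equations: κ'/κ = r(φ')² + q₀² r κ² (A/Ω²)² φ²; ϖ' = (−Λ/3)α r²φ²/2 + (r²(φ')²/2)·Ω²κ⁻² + q₀²A²r²φ²/(2Ω²) + q₀² Q r (A/Ω²) κ φ²; and Q' = q₀² r² κ (A/Ω²) φ², where Ω²(r) := κ(r)²·(1 − 2ϖ(r)/r + Q(r)²/r² + (−Λ/3)r²) is assumed positive on I. Then for all r ∈ I, the identity −Ω²(r)κ(r)⁻¹·(d/dr)[r·Ω²(r)·κ(r)⁻¹] = −Ω²(r)·(1 − Q(r)²/r²) + r²·Ω²(r)·(Λ + (−Λ/3)·α·φ(r)²) holds. -/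
open Real Set Filter

set_option maxHeartbeats 2000000 in
theorem stmt_7 (Λ α q0 : ℝ) (hΛ : Λ < 0) (I : Set ℝ)
    (hIopen : IsOpen I) (hIconn : I.OrdConnected) (hIsub : I ⊆ Ioi (0:ℝ))
    (κ ϖ Q A φ κd ϖd Qd Ad φd : ℝ → ℝ)
    (hκ : ∀ r ∈ I, HasDerivAt κ (κd r) r) (hκc : ContinuousOn κd I)
    (hϖ : ∀ r ∈ I, HasDerivAt ϖ (ϖd r) r) (hϖc : ContinuousOn ϖd I)
    (hQ : ∀ r ∈ I, HasDerivAt Q (Qd r) r) (hQc : ContinuousOn Qd I)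
    (hA : ∀ r ∈ I, HasDerivAt A (Ad r) r) (hAc : ContinuousOn Ad I)
    (hφ : ∀ r ∈ I, HasDerivAt φ (φd r) r) (hφc : ContinuousOn φd I)
    (hκpos : ∀ r ∈ I, 0 < κ r)
    (Ω2 : ℝ → ℝ)
    (hΩ2 : ∀ r, Ω2 r = (κ r)^2 * (1 - 2*ϖ r/r + (Q r)^2/r^2 + (-Λ/3)*r^2))
    (hΩpos : ∀ r ∈ I, 0 < Ω2 r)
    (heq1 : ∀ r ∈ I, κd r / κ r =
        r*(φd r)^2 + q0^2*r*(κ r)^2*(A r/Ω2 r)^2*(φ r)^2)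
    (heq2 : ∀ r ∈ I, ϖd r =
        (-Λ/3)*α*r^2*(φ r)^2/2 + (r^2*(φd r)^2/2)*(Ω2 r/(κ r)^2)
        + q0^2*(A r)^2*r^2*(φ r)^2/(2*Ω2 r)
        + q0^2*(Q r)*r*(A r/Ω2 r)*(κ r)*(φ r)^2)
    (heq3 : ∀ r ∈ I, Qd r = q0^2*r^2*(κ r)*(A r/Ω2 r)*(φ r)^2) :
    ∀ r ∈ I, -(Ω2 r) * (κ r)⁻¹ * deriv (fun s => s * Ω2 s * (κ s)⁻¹) r
      = -(Ω2 r) * (1 - (Q r)^2/r^2) + r^2 * Ω2 r * (Λ + (-Λ/3)*α*(φ r)^2) := by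
  intro r hr
  have hrpos : (0:ℝ) < r := hIsub hr
  have hr0 : r ≠ 0 := ne_of_gt hrpos
  have hκ0 : κ r ≠ 0 := ne_of_gt (hκpos r hr)
  have hΩ0 : Ω2 r ≠ 0 := ne_of_gt (hΩpos r hr)
  have hFeq : (fun s => s * Ω2 s * (κ s)⁻¹)
      = fun s => s * ((κ s)^2 * (1 - 2*ϖ s/s + (Q s)^2/s^2 + (-Λ/3)*s^2)) * (κ s)⁻¹ := by
    funext s; rw [hΩ2 s]
  rw [hFeq]
  -- build HasDerivAt
  have hid : HasDerivAt (fun s : ℝ => s) 1 r := hasDerivAt_id r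
  have hκr := hκ r hr
  have hϖr := hϖ r hr
  have hQr := hQ r hr
  have hκsq : HasDerivAt (fun s => (κ s)^2) (2 * κ r ^ 1 * κd r) r := hκr.pow 2
  have h2ϖ : HasDerivAt (fun s => 2*ϖ s) (2 * ϖd r) r := hϖr.const_mul 2
  have hdiv1 : HasDerivAt (fun s => 2*ϖ s / s) ((2*ϖd r * r - 2*ϖ r * 1)/r^2) r :=
    h2ϖ.div hid hr0
  have hQ2 : HasDerivAt (fun s => (Q s)^2) (2 * Q r ^ 1 * Qd r) r := hQr.pow 2
  have hs2 : HasDerivAt (fun s : ℝ => s^2) (2 * r ^ 1) r := by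
    simpa using hasDerivAt_pow 2 r
  have hr2ne : r^2 ≠ 0 := pow_ne_zero 2 hr0
  have hdiv2 : HasDerivAt (fun s => (Q s)^2 / s^2)
      ((2 * Q r ^ 1 * Qd r * r^2 - (Q r)^2 * (2 * r ^ 1)) / (r^2)^2) r := hQ2.div hs2 hr2ne
  have hcs2 : HasDerivAt (fun s : ℝ => (-Λ/3)*s^2) ((-Λ/3) * (2 * r ^ 1)) r := hs2.const_mul _
  have hinner : HasDerivAt (fun s => 1 - 2*ϖ s/s + (Q s)^2/s^2 + (-Λ/3)*s^2)
      (- ((2*ϖd r * r - 2*ϖ r * 1)/r^2)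
        + (2 * Q r ^ 1 * Qd r * r^2 - (Q r)^2 * (2 * r ^ 1)) / (r^2)^2
        + (-Λ/3) * (2 * r ^ 1)) r := by
    have := (((hasDerivAt_const r (1:ℝ)).sub hdiv1).add hdiv2).add hcs2
    simpa [Pi.sub_def, Pi.add_def] using this
  have hinv : HasDerivAt (fun s => (κ s)⁻¹) (-(κd r) / (κ r)^2) r := hκr.inv hκ0
  have hprod := ((hid.mul (hκsq.mul hinner)).mul hinv)
  simp only [Pi.mul_def] at hprod
  rw [hprod.deriv]
  have e1 : κd r = (r*(φd r)^2 + q0^2*r*(κ r)^2*(A r/Ω2 r)^2*(φ r)^2) * κ r :=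
    (div_eq_iff hκ0).mp (heq1 r hr)
  have e2 := heq2 r hr
  have e3 := heq3 r hr
  have hϖval : ϖ r = r/2*(1 + (Q r)^2/r^2 + (-Λ/3)*r^2 - Ω2 r/(κ r)^2) := by
    have h := hΩ2 r
    field_simp at h
    field_simp
    linarith
  rw [e1, e2, e3, hϖval]
  field_simp
  ring
end
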